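/- Define f : ℝ² → ℝ by f(x) = ln(1 − ln|x|) for 0 < |x| ≤ 1 and f(x) = 0 for |x| > 1. Then for every 0 < r ≤ 1, the average of f over the ball B(0,r) satisfies 0 ≤ av_{B(0,r)}(f) − ln(1 − ln r) ≤ 1. -/

import Mathlib

open MeasureTheory Metric Real
open scoped ENNReal

noncomputable section

abbrev E2 := EuclideanSpace ℝ (Fin 2)

/-- Average of `f` over the ball `B(c,r)`. -/
def avg (f : E2 → ℝ) (c : E2) (r : ℝ) : ℝ := ⨍ x in ball c r, f x

/-- The BMO seminorm, as a supremum in `[0,∞]`. -/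
def bmoNorm (f : E2 → ℝ) : ℝ≥0∞ :=
  ⨆ (c : E2) (r : ℝ) (_ : 0 < r), ENNReal.ofReal (⨍ x in ball c r, |f x - avg f c r|)

/-- The second part of the LBMO norm: supremum over pairs of balls `B₁ = B(x₁,r₁)`,
`B₂ = B(x₂,r₂)` with `0 < r₁ ≤ 1` and `2B₂ ⊆ B₁`. -/
def lbmoSup (f : E2 → ℝ) : ℝ≥0∞ :=
  ⨆ (x₁ : E2) (x₂ : E2) (r₁ : ℝ) (r₂ : ℝ) (_ : 0 < r₂) (_ : 0 < r₁) (_ : r₁ ≤ 1)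
    (_ : ball x₂ (2 * r₂) ⊆ ball x₁ r₁),
    ENNReal.ofReal (|avg f x₂ r₂ - avg f x₁ r₁| /
      (1 + Real.log ((1 - Real.log r₂) / (1 - Real.log r₁))))

/-- The LBMO norm. -/
def lbmoNorm (f : E2 → ℝ) : ℝ≥0∞ := bmoNorm f + lbmoSup f

-- The unbounded function `f(x) = ln(1 - ln |x|)` for `0 < |x| ≤ 1`, `f(x) = 0` otherwise.
open Classical in
def fLog : E2 → ℝ :=
  fun x => if ‖x‖ ≤ 1 ∧ x ≠ 0 then Real.log (1 - Real.log ‖x‖) else 0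

open Set

lemma one_sub_log_pos {s : ℝ} (hs0 : 0 < s) (hs1 : s ≤ 1) : 0 < 1 - Real.log s := by
  have := Real.log_nonpos hs0.le hs1; linarith

lemma one_sub_log_ge_one {s : ℝ} (hs0 : 0 < s) (hs1 : s ≤ 1) : 1 ≤ 1 - Real.log s := by
  have := Real.log_nonpos hs0.le hs1; linarith

lemma log_one_sub_log_nonneg {s : ℝ} (hs0 : 0 < s) (hs1 : s ≤ 1) :
    0 ≤ Real.log (1 - Real.log s) :=
  Real.log_nonneg (one_sub_log_ge_one hs0 hs1)

lemma log_one_sub_log_le {s : ℝ} (hs0 : 0 < s) (hs1 : s ≤ 1) :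
    Real.log (1 - Real.log s) ≤ -Real.log s := by
  have := Real.log_le_sub_one_of_pos (one_sub_log_pos hs0 hs1)
  linarith

lemma neg_log_le_sqrt {s : ℝ} (hs0 : 0 < s) : -Real.log s ≤ 2 / Real.sqrt s := by
  have hsq : 0 < Real.sqrt s := Real.sqrt_pos.2 hs0
  have h1 : Real.log (Real.sqrt s)⁻¹ ≤ (Real.sqrt s)⁻¹ - 1 :=
    Real.log_le_sub_one_of_pos (by positivity)
  rw [Real.log_inv, Real.log_sqrt hs0.le] at h1
  rw [inv_eq_one_div] at h1
  have h3 : 2 * (1 / Real.sqrt s) = 2 / Real.sqrt s := by ring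
  linarith

lemma log_one_sub_log_le_sqrt {s : ℝ} (hs0 : 0 < s) (hs1 : s ≤ 1) :
    Real.log (1 - Real.log s) ≤ 2 / Real.sqrt s :=
  (log_one_sub_log_le hs0 hs1).trans (neg_log_le_sqrt hs0)

lemma hasDerivAt_F {s : ℝ} (hs0 : 0 < s) (hs1 : s ≤ 1) :
    HasDerivAt (fun t : ℝ => t ^ 2 * Real.log (1 - Real.log t))
      (2 * s * Real.log (1 - Real.log s) - s / (1 - Real.log s)) s := by
  have h1 := one_sub_log_pos hs0 hs1
  have hinner : HasDerivAt (fun t : ℝ => 1 - Real.log t) (-s⁻¹) s := by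
    simpa using (Real.hasDerivAt_log hs0.ne').const_sub 1
  have hlog : HasDerivAt (fun t : ℝ => Real.log (1 - Real.log t))
      (-s⁻¹ / (1 - Real.log s)) s := hinner.log h1.ne'
  have hpow : HasDerivAt (fun t : ℝ => t ^ 2) (2 * s) s := by
    simpa using hasDerivAt_pow 2 s
  refine (hpow.fun_mul hlog).congr_deriv ?_
  show 2 * s * Real.log (1 - Real.log s) + s ^ 2 * (-s⁻¹ / (1 - Real.log s)) = _
  field_simp
  ring

lemma Fprime_bound {s : ℝ} (hs0 : 0 < s) (hs1 : s ≤ 1) :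
    ‖2 * s * Real.log (1 - Real.log s) - s / (1 - Real.log s)‖ ≤ 5 := by
  have h1 := one_sub_log_ge_one hs0 hs1
  have hA0 : 0 ≤ 2 * s * Real.log (1 - Real.log s) := by
    have := log_one_sub_log_nonneg hs0 hs1; positivity
  have hsq : 0 < Real.sqrt s := Real.sqrt_pos.2 hs0
  have hs_eq : s / Real.sqrt s = Real.sqrt s := Real.div_sqrt
  have hsqle : Real.sqrt s ≤ 1 := by
    rw [show (1:ℝ) = Real.sqrt 1 by simp]; exact Real.sqrt_le_sqrt hs1
  have hA4 : 2 * s * Real.log (1 - Real.log s) ≤ 4 := by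
    have h2 := log_one_sub_log_le_sqrt hs0 hs1
    have : 2 * s * Real.log (1 - Real.log s) ≤ 2 * s * (2 / Real.sqrt s) := by
      apply mul_le_mul_of_nonneg_left h2 (by positivity)
    have h3 : 2 * s * (2 / Real.sqrt s) = 4 * (s / Real.sqrt s) := by ring
    rw [h3, hs_eq] at this
    linarith
  have hB0 : 0 ≤ s / (1 - Real.log s) := by positivity
  have hB1 : s / (1 - Real.log s) ≤ 1 :=
    (div_le_one (by linarith)).2 (by linarith)
  rw [Real.norm_eq_abs, abs_le]
  constructor <;> linarith

lemma key1d (r : ℝ) (hr0 : 0 < r) (hr1 : r ≤ 1) :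
    ∃ J : ℝ, 0 ≤ J ∧ J ≤ r ^ 2 / 2 ∧
      ∫ y in Ioc (0:ℝ) r, y * Real.log (1 - Real.log y) =
        (r ^ 2 * Real.log (1 - Real.log r) + J) / 2 := by
  set F' : ℝ → ℝ := fun s => 2 * s * Real.log (1 - Real.log s) - s / (1 - Real.log s) with hF'
  set g : ℝ → ℝ := fun s => s / (1 - Real.log s) with hg
  -- integrability of F'
  have hmlog : Measurable fun s : ℝ => Real.log (1 - Real.log s) :=
    Real.measurable_log.comp (measurable_const.sub Real.measurable_log)
  have hmg0 : Measurable g :=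
    measurable_id.div (measurable_const.sub Real.measurable_log)
  have hmF' : AEStronglyMeasurable F' (volume.restrict (Ioc (0:ℝ) r)) := by
    apply Measurable.aestronglyMeasurable
    exact ((measurable_id.const_mul 2).mul hmlog).sub hmg0
  have hintF' : IntegrableOn F' (Ioc (0:ℝ) r) := by
    apply Integrable.mono' (integrableOn_const (C := (5:ℝ)) measure_Ioc_lt_top.ne) hmF'
    rw [ae_restrict_iff' measurableSet_Ioc]
    filter_upwards with s hs
    exact Fprime_bound hs.1 (hs.2.trans hr1)
  have hmg : AEStronglyMeasurable g (volume.restrict (Ioc (0:ℝ) r)) :=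
    hmg0.aestronglyMeasurable
  have hintg : IntegrableOn g (Ioc (0:ℝ) r) := by
    apply Integrable.mono' (integrableOn_const (C := (1:ℝ)) measure_Ioc_lt_top.ne) hmg
    rw [ae_restrict_iff' measurableSet_Ioc]
    filter_upwards with s hs
    have h1 := one_sub_log_ge_one hs.1 (hs.2.trans hr1)
    have : 0 ≤ g s := div_nonneg hs.1.le (by linarith)
    rw [Real.norm_eq_abs, abs_of_nonneg this]
    exact (div_le_one (by linarith)).2 (by nlinarith [hs.2.trans hr1])
  -- FTC
  have htend0 : Filter.Tendsto (fun t : ℝ => t ^ 2 * Real.log (1 - Real.log t))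
      (nhdsWithin 0 (Set.Ioi 0)) (nhds 0) := by
    apply squeeze_zero' (g := fun t => 2 * Real.sqrt t)
    · filter_upwards [Ioo_mem_nhdsGT_of_mem (Set.left_mem_Ico.2 zero_lt_one)] with t ht
      have := log_one_sub_log_nonneg ht.1 ht.2.le
      positivity
    · filter_upwards [Ioo_mem_nhdsGT_of_mem (Set.left_mem_Ico.2 zero_lt_one)] with t ht
      have h2 := log_one_sub_log_le_sqrt ht.1 ht.2.le
      have hsq : 0 < Real.sqrt t := Real.sqrt_pos.2 ht.1
      have : t ^ 2 * Real.log (1 - Real.log t) ≤ t ^ 2 * (2 / Real.sqrt t) :=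
        mul_le_mul_of_nonneg_left h2 (by positivity)
      refine this.trans ?_
      have heq : t ^ 2 * (2 / Real.sqrt t) = 2 * t * (t / Real.sqrt t) := by ring
      rw [heq, Real.div_sqrt]
      nlinarith [mul_nonneg (Real.sqrt_nonneg t) (sub_nonneg.2 ht.2.le)]
    · have : Filter.Tendsto (fun t : ℝ => 2 * Real.sqrt t) (nhds 0) (nhds (2 * Real.sqrt 0)) :=
        Filter.Tendsto.const_mul 2 (Real.continuous_sqrt.tendsto 0)
      simpa using this.mono_left nhdsWithin_le_nhds
  have htendr : Filter.Tendsto (fun t : ℝ => t ^ 2 * Real.log (1 - Real.log t))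
      (nhdsWithin r (Set.Iio r)) (nhds (r ^ 2 * Real.log (1 - Real.log r))) :=
    ((hasDerivAt_F hr0 hr1).continuousAt.tendsto).mono_left nhdsWithin_le_nhds
  have hFTC : ∫ y in (0:ℝ)..r, F' y = r ^ 2 * Real.log (1 - Real.log r) - 0 := by
    apply intervalIntegral.integral_eq_sub_of_hasDerivAt_of_tendsto hr0
      (fun x hx => hasDerivAt_F hx.1 (hx.2.le.trans hr1)) _ htend0 htendr
    rw [intervalIntegrable_iff_integrableOn_Ioc_of_le hr0.le]
    exact hintF'
  rw [intervalIntegral.integral_of_le hr0.le, sub_zero] at hFTC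
  refine ⟨∫ y in Ioc (0:ℝ) r, g y, ?_, ?_, ?_⟩
  · apply setIntegral_nonneg measurableSet_Ioc
    intro s hs
    have h1 := one_sub_log_ge_one hs.1 (hs.2.trans hr1)
    exact div_nonneg hs.1.le (by linarith)
  · have hle : ∫ y in Ioc (0:ℝ) r, g y ≤ ∫ y in Ioc (0:ℝ) r, y := by
      apply setIntegral_mono_on hintg _ measurableSet_Ioc
      · intro s hs
        have h1 := one_sub_log_ge_one hs.1 (hs.2.trans hr1)
        exact div_le_self hs.1.le h1
      · exact (continuous_id.integrableOn_Ioc)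
    have : ∫ y in Ioc (0:ℝ) r, y = r ^ 2 / 2 := by
      rw [← intervalIntegral.integral_of_le hr0.le, integral_id]
      ring
    linarith
  · have hsum : ∀ y : ℝ, y * Real.log (1 - Real.log y) = (F' y + g y) / 2 := by
      intro y; simp only [hF', hg]; ring
    have : ∫ y in Ioc (0:ℝ) r, y * Real.log (1 - Real.log y)
        = (∫ y in Ioc (0:ℝ) r, (F' y + g y)) / 2 := by
      rw [← integral_div]
      exact setIntegral_congr_fun measurableSet_Ioc fun y _ => hsum y
    rw [this, integral_add hintF' hintg, hFTC]

/-- sharp two-sided estimate of the averages of `fLog` on balls centered at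
the origin: `0 ≤ av_{B(0,r)}(f) - ln(1 - ln r) ≤ 1` for `0 < r ≤ 1`. -/
theorem fLog_average_estimate (r : ℝ) (hr0 : 0 < r) (hr1 : r ≤ 1) :
    0 ≤ avg fLog 0 r - Real.log (1 - Real.log r) ∧
    avg fLog 0 r - Real.log (1 - Real.log r) ≤ 1 := by
  classical
  obtain ⟨J, hJ0, hJle, hK⟩ := key1d r hr0 hr1
  set c : ℝ := (volume (ball (0:E2) 1)).toReal with hc
  have hcpos : 0 < c :=
    ENNReal.toReal_pos (measure_ball_pos volume 0 one_pos).ne' measure_ball_lt_top.ne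
  set G : ℝ → ℝ := fun y => if y < r ∧ y ≤ 1 ∧ y ≠ 0 then Real.log (1 - Real.log y) else 0
    with hG
  have hind : (ball (0:E2) r).indicator fLog = fun x => G ‖x‖ := by
    funext x
    by_cases h0 : x = 0
    · simp [h0, Set.indicator, mem_ball_zero_iff, fLog, hG, hr0]
    · have hn : ‖x‖ ≠ 0 := norm_ne_zero_iff.2 h0
      by_cases h1 : ‖x‖ < r
      · have h2 : ‖x‖ ≤ 1 := h1.le.trans hr1
        simp [Set.indicator, mem_ball_zero_iff, fLog, hG, h0, h1, hn, h2]
      · simp [Set.indicator, mem_ball_zero_iff, fLog, hG, h1]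
  have hpolar := integral_fun_norm_addHaar (volume : Measure E2) G
  rw [show Module.finrank ℝ E2 = 2 from finrank_euclideanSpace_fin] at hpolar
  norm_num at hpolar
  -- hpolar : ∫ x, G ‖x‖ = 2 • c • ∫ y in Ioi 0, y ^ 1 • G y  (hopefully simplified)
  have hIoi : ∫ y in Set.Ioi (0:ℝ), y * G y
      = ∫ y in Set.Ioc (0:ℝ) r, y * Real.log (1 - Real.log y) := by
    have h1 : ∫ y in Set.Ioi (0:ℝ), y * G y
        = ∫ y in Set.Ioi (0:ℝ),
            (Set.Ioo (0:ℝ) r).indicator (fun y => y * Real.log (1 - Real.log y)) y := by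
      apply setIntegral_congr_fun measurableSet_Ioi
      intro y hy
      have hy0 : (0:ℝ) < y := hy
      by_cases h : y < r
      · have hmem : y ∈ Set.Ioo (0:ℝ) r := ⟨hy0, h⟩
        simp only [Set.indicator_of_mem hmem, hG]
        rw [if_pos ⟨h, h.le.trans hr1, ne_of_gt hy0⟩]
      · have hmem : y ∉ Set.Ioo (0:ℝ) r := fun hm => h hm.2
        simp only [Set.indicator_of_notMem hmem, hG]
        rw [if_neg (fun hcond => h hcond.1), mul_zero]
    rw [h1, setIntegral_indicator measurableSet_Ioo,
      Set.inter_eq_self_of_subset_right Set.Ioo_subset_Ioi_self,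
      ← integral_Ioc_eq_integral_Ioo]
  have hball : (volume (ball (0:E2) r)).toReal = r ^ 2 * c := by
    rw [Measure.addHaar_ball _ _ hr0.le,
      show Module.finrank ℝ E2 = 2 from finrank_euclideanSpace_fin,
      ENNReal.toReal_mul, ENNReal.toReal_ofReal (by positivity)]
  have havg : avg fLog 0 r = Real.log (1 - Real.log r) + J / r ^ 2 := by
    rw [avg, setAverage_eq, ← integral_indicator measurableSet_ball, hind, hpolar, measureReal_def, measureReal_def, hball,
      hIoi, hK, smul_eq_mul]
    rw [← hc]
    field_simp
  rw [havg]
  constructor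
  · have : 0 ≤ J / r ^ 2 := by positivity
    linarith
  · have : J / r ^ 2 ≤ 1 / 2 := by
      rw [div_le_div_iff₀ (by positivity) (by norm_num)]
      linarith
    linarith
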